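/- Let 0 < r < 1 and 0 < p, q < 1 satisfy 1/p + 1/q = log₂(2^r + 2)/r. If the inequality ‖f*g‖_{ℓ^r(ℤ^d)} ≥ ‖f‖_{ℓ^p(ℤ^d)} ‖g‖_{ℓ^q(ℤ^d)} holds for every d ≥ 1 and all f, g : ℤ^d → [0,∞) supported in {0,1}^d, then 1 / ( log₂(2^r + 2)/r − (1 + 2^{r-1})/(r + 2^{r-1}) ) ≤ p, q ≤ (r + 2^{r-1})/(1 + 2^{r-1}). -/

import Mathlib

open scoped BigOperators ENNReal

/-- Convolution of two functions on `ℤ^d`. -/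
noncomputable def cconv {d : ℕ} (f g : (Fin d → ℤ) → ℝ) : (Fin d → ℤ) → ℝ :=
  fun m => ∑' u : Fin d → ℤ, f u * g (m - u)

/-- A point of `ℤ^d` lies in the hypercube `{0,1}^d`. -/
def InCube {d : ℕ} (x : Fin d → ℤ) : Prop := ∀ i, x i = 0 ∨ x i = 1

/-- A function on `ℤ^d` is supported in `{0,1}^d`. -/
def SupportedInCube {d : ℕ} (f : (Fin d → ℤ) → ℝ) : Prop :=
  ∀ x : Fin d → ℤ, ¬ InCube x → f x = 0

/-- The `ℓ^s` norm of a function on `ℤ^d` (for `0 < s < ∞`). -/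
noncomputable def lnorm {d : ℕ} (s : ℝ) (f : (Fin d → ℤ) → ℝ) : ℝ :=
  (∑' x : Fin d → ℤ, |f x| ^ s) ^ (1 / s)

open Filter Topology

section Aux

lemma tsum_eval (φ : ℤ → ℝ) (hφ : ∀ n : ℤ, n ≠ 0 → n ≠ 1 → n ≠ 2 → φ n = 0) :
    ∑' x : Fin 1 → ℤ, φ (x 0) = φ 0 + φ 1 + φ 2 := by
  have h1 : ∑' x : Fin 1 → ℤ, φ (x 0) = ∑' n : ℤ, φ n := by
    rw [← Equiv.tsum_eq ((Equiv.funUnique (Fin 1) ℤ).symm) (fun x => φ (x 0))]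
    simp [Equiv.funUnique]
  rw [h1, tsum_eq_sum (s := ({0,1,2} : Finset ℤ)) (by intro b hb; apply hφ <;> simp_all)]
  simp [Finset.sum_insert, add_assoc]

def two (a b : ℝ) : ℤ → ℝ := fun n => if n = 0 then a else if n = 1 then b else 0

def three (u v w : ℝ) : ℤ → ℝ :=
  fun n => if n = 0 then u else if n = 1 then v else if n = 2 then w else 0

lemma two_supported (a b : ℝ) : SupportedInCube (fun x : Fin 1 → ℤ => two a b (x 0)) := by
  intro x hx
  have h0 : ¬ (x 0 = 0 ∨ x 0 = 1) := by
    intro hc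
    exact hx (fun i => by rw [Subsingleton.elim i 0]; exact hc)
  push_neg at h0
  simp [two, h0.1, h0.2]

lemma two_nonneg (a b : ℝ) (ha : 0 ≤ a) (hb : 0 ≤ b) (x : Fin 1 → ℤ) :
    0 ≤ two a b (x 0) := by
  unfold two; split_ifs <;> simp [ha, hb]

lemma lnorm_two (s a b : ℝ) (hs : s ≠ 0) (ha : 0 ≤ a) (hb : 0 ≤ b) :
    lnorm s (fun x : Fin 1 → ℤ => two a b (x 0)) = (a ^ s + b ^ s) ^ (1 / s) := by
  unfold lnorm
  rw [tsum_eval (fun n => |two a b n| ^ s)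
    (by intro n h0 h1 _; simp [two, h0, h1, Real.zero_rpow hs])]
  norm_num [two, Real.zero_rpow hs, abs_of_nonneg ha, abs_of_nonneg hb]

lemma cconv_two (a b a' b' : ℝ) :
    cconv (fun x : Fin 1 → ℤ => two a b (x 0)) (fun x : Fin 1 → ℤ => two a' b' (x 0))
      = fun x : Fin 1 → ℤ => three (a * a') (a * b' + b * a') (b * b') (x 0) := by
  funext m
  unfold cconv
  have key : ∀ u : Fin 1 → ℤ, two a b (u 0) * two a' b' ((m - u) 0)
      = (fun n : ℤ => two a b n * two a' b' (m 0 - n)) (u 0) := fun u => rfl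
  simp only [key]
  rw [tsum_eval (fun n : ℤ => two a b n * two a' b' (m 0 - n))
    (by intro n h0 h1 _; simp [two, h0, h1])]
  have h2 : two a b 2 = 0 := by simp [two]
  rw [h2, zero_mul, add_zero]
  set k := m 0 with hk
  by_cases h0 : k = 0
  · norm_num [two, three, h0]
  by_cases h1 : k = 1
  · norm_num [two, three, h1]
  by_cases h2' : k = 2
  · norm_num [two, three, h2']
  · have e1 : k - 1 ≠ 0 := by omega
    have e2 : k - 1 ≠ 1 := by omega
    simp [two, three, h0, h1, h2', e1, e2]

lemma lnorm_three (s u v w : ℝ) (hs : s ≠ 0) (hu : 0 ≤ u) (hv : 0 ≤ v) (hw : 0 ≤ w) :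
    lnorm s (fun x : Fin 1 → ℤ => three u v w (x 0)) = (u ^ s + v ^ s + w ^ s) ^ (1 / s) := by
  unfold lnorm
  rw [tsum_eval (fun n => |three u v w n| ^ s)
    (by intro n h0 h1 h2; simp [three, h0, h1, h2, Real.zero_rpow hs])]
  norm_num [three, abs_of_nonneg hu, abs_of_nonneg hv, abs_of_nonneg hw]

lemma three_nonneg (u v w : ℝ) (hu : 0 ≤ u) (hv : 0 ≤ v) (hw : 0 ≤ w) (x : Fin 1 → ℤ) :
    0 ≤ three u v w (x 0) := by
  unfold three; split_ifs <;> simp [hu, hv, hw]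

lemma instantiate (r p q : ℝ)
    (h : ∀ d : ℕ, 1 ≤ d → ∀ f g : (Fin d → ℤ) → ℝ,
      (∀ x, 0 ≤ f x) → (∀ x, 0 ≤ g x) →
        SupportedInCube f → SupportedInCube g →
          lnorm p f * lnorm q g ≤ lnorm r (cconv f g))
    (hr : r ≠ 0) (hp : p ≠ 0) (hq : q ≠ 0)
    (a b a' b' : ℝ) (ha : 0 ≤ a) (hb : 0 ≤ b) (ha' : 0 ≤ a') (hb' : 0 ≤ b') :
    (a ^ p + b ^ p) ^ (1 / p) * (a' ^ q + b' ^ q) ^ (1 / q)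
      ≤ ((a * a') ^ r + (a * b' + b * a') ^ r + (b * b') ^ r) ^ (1 / r) := by
  have H := h 1 le_rfl (fun x : Fin 1 → ℤ => two a b (x 0))
    (fun x : Fin 1 → ℤ => two a' b' (x 0))
    (two_nonneg a b ha hb) (two_nonneg a' b' ha' hb')
    (two_supported a b) (two_supported a' b')
  rwa [lnorm_two p a b hp ha hb, lnorm_two q a' b' hq ha' hb', cconv_two,
    lnorm_three r _ _ _ hr (by positivity) (by positivity) (by positivity)] at H

noncomputable def Hfun (r p : ℝ) : ℝ → ℝ := fun t =>
  (r / p) * (Real.log (1 + t ^ p) - Real.log 2) +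
    (Real.log (2 ^ r + 2) - Real.log (1 + (1 + t) ^ r + t ^ r))

noncomputable def Hd (r p : ℝ) : ℝ → ℝ := fun t =>
  r * (t ^ (p - 1) / (1 + t ^ p)) -
    r * (((1 + t) ^ (r - 1) + t ^ (r - 1)) / (1 + (1 + t) ^ r + t ^ r))

lemma denomA_pos (p t : ℝ) (ht : 0 < t) : 0 < 1 + t ^ p := by
  have := Real.rpow_pos_of_pos ht p; linarith

lemma denomN_pos (r t : ℝ) (ht : 0 < t) : 0 < 1 + (1 + t) ^ r + t ^ r := by
  have h1 := Real.rpow_pos_of_pos (show (0:ℝ) < 1 + t by linarith) r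
  have h2 := Real.rpow_pos_of_pos ht r
  linarith

lemma two_pow_shift (r : ℝ) : (2:ℝ) ^ r = 2 * 2 ^ (r - 1) := by
  rw [show r = 1 + (r - 1) by ring, Real.rpow_add (by norm_num : (0:ℝ) < 2), Real.rpow_one]
  ring_nf

lemma two_pow_shift2 (r : ℝ) : (2:ℝ) ^ (r - 2) = 2 ^ (r - 1) / 2 := by
  rw [show r - 2 = (r - 1) - 1 by ring, Real.rpow_sub (by norm_num : (0:ℝ) < 2), Real.rpow_one]

lemma hasDerivAt_Hfun (r p : ℝ) (hp : p ≠ 0) (t : ℝ) (ht : 0 < t) :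
    HasDerivAt (Hfun r p) (Hd r p t) t := by
  have hA : 0 < 1 + t ^ p := denomA_pos p t ht
  have hN : 0 < 1 + (1 + t) ^ r + t ^ r := denomN_pos r t ht
  have h1 : HasDerivAt (fun t : ℝ => t ^ p) (p * t ^ (p - 1)) t :=
    Real.hasDerivAt_rpow_const (Or.inl ht.ne')
  have h2 : HasDerivAt (fun t : ℝ => 1 + t ^ p) (p * t ^ (p - 1)) t := h1.const_add 1
  have h3 : HasDerivAt (fun t : ℝ => Real.log (1 + t ^ p))
      (p * t ^ (p - 1) / (1 + t ^ p)) t := h2.log hA.ne'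
  have h4i : HasDerivAt (fun t : ℝ => 1 + t) 1 t := (hasDerivAt_id t).const_add 1
  have h4o : HasDerivAt (fun s : ℝ => s ^ r) (r * (1 + t) ^ (r - 1)) (1 + t) :=
    Real.hasDerivAt_rpow_const (Or.inl (by linarith))
  have h4 : HasDerivAt (fun t : ℝ => (1 + t) ^ r) (r * (1 + t) ^ (r - 1)) t := by
    have := h4o.comp t h4i; simpa [Function.comp_def] using this
  have h5 : HasDerivAt (fun t : ℝ => t ^ r) (r * t ^ (r - 1)) t :=
    Real.hasDerivAt_rpow_const (Or.inl ht.ne')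
  have h6 : HasDerivAt (fun t : ℝ => 1 + (1 + t) ^ r + t ^ r)
      (r * (1 + t) ^ (r - 1) + r * t ^ (r - 1)) t := ((h4.const_add 1).add h5)
  have h7 : HasDerivAt (fun t : ℝ => Real.log (1 + (1 + t) ^ r + t ^ r))
      ((r * (1 + t) ^ (r - 1) + r * t ^ (r - 1)) / (1 + (1 + t) ^ r + t ^ r)) t :=
    h6.log hN.ne'
  have h8 := ((h3.sub_const (Real.log 2)).const_mul (r / p)).add
    ((h7.const_sub (Real.log (2 ^ r + 2))))
  refine h8.congr_deriv ?_
  unfold Hd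
  field_simp
  ring

lemma hasDerivAt_Hd_one (r p : ℝ) :
    HasDerivAt (Hd r p)
      (r * ((p - 2) / 4) - r * ((r - 2 ^ (r - 1) - 2) / (4 * (1 + 2 ^ (r - 1))))) 1 := by
  have hc : (0:ℝ) < 2 ^ (r - 1) := Real.rpow_pos_of_pos (by norm_num) _
  have n1 : HasDerivAt (fun t : ℝ => t ^ (p - 1)) ((p - 1) * (1:ℝ) ^ (p - 1 - 1)) 1 :=
    Real.hasDerivAt_rpow_const (Or.inl one_ne_zero)
  have d1 : HasDerivAt (fun t : ℝ => 1 + t ^ p) (p * (1:ℝ) ^ (p - 1)) 1 :=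
    (Real.hasDerivAt_rpow_const (Or.inl one_ne_zero)).const_add 1
  have hA1 : (1:ℝ) + (1:ℝ) ^ p ≠ 0 := by rw [Real.one_rpow]; norm_num
  have q1 := n1.div d1 hA1
  have hi : HasDerivAt (fun t : ℝ => 1 + t) 1 (1:ℝ) := (hasDerivAt_id 1).const_add 1
  have n2a : HasDerivAt (fun t : ℝ => (1 + t) ^ (r - 1))
      ((r - 1) * (2:ℝ) ^ (r - 1 - 1)) 1 := by
    have ho : HasDerivAt (fun s : ℝ => s ^ (r - 1)) ((r - 1) * (2:ℝ) ^ (r - 1 - 1)) (1 + 1 : ℝ) := by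
      have := Real.hasDerivAt_rpow_const (x := (1:ℝ) + 1) (p := r - 1) (Or.inl (by norm_num))
      norm_num at this ⊢
      exact this
    have := ho.comp (1:ℝ) hi; simpa [Function.comp_def] using this
  have n2b : HasDerivAt (fun t : ℝ => t ^ (r - 1)) ((r - 1) * (1:ℝ) ^ (r - 1 - 1)) 1 :=
    Real.hasDerivAt_rpow_const (Or.inl one_ne_zero)
  have n2 := n2a.add n2b
  have d2a : HasDerivAt (fun t : ℝ => (1 + t) ^ r) (r * (2:ℝ) ^ (r - 1)) 1 := by
    have ho : HasDerivAt (fun s : ℝ => s ^ r) (r * (2:ℝ) ^ (r - 1)) (1 + 1 : ℝ) := by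
      have := Real.hasDerivAt_rpow_const (x := (1:ℝ) + 1) (p := r) (Or.inl (by norm_num))
      norm_num at this ⊢
      exact this
    have := ho.comp (1:ℝ) hi; simpa [Function.comp_def] using this
  have d2b : HasDerivAt (fun t : ℝ => t ^ r) (r * (1:ℝ) ^ (r - 1)) 1 :=
    Real.hasDerivAt_rpow_const (Or.inl one_ne_zero)
  have d2 : HasDerivAt (fun t : ℝ => 1 + (1 + t) ^ r + t ^ r)
      (r * (2:ℝ) ^ (r - 1) + r * (1:ℝ) ^ (r - 1)) 1 := (d2a.const_add 1).add d2b
  have hN1 : (1:ℝ) + ((1:ℝ) + 1) ^ r + (1:ℝ) ^ r ≠ 0 := by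
    have : ((1:ℝ) + 1) ^ r = 2 ^ r := by norm_num
    rw [this, Real.one_rpow, two_pow_shift]
    nlinarith
  have q2 := n2.div d2 hN1
  have H := (q1.const_mul r).sub (q2.const_mul r)
  refine H.congr_deriv ?_
  simp only [show ((1:ℝ) + 1) = (2:ℝ) from by norm_num,
    show r - 1 - 1 = r - 2 from by ring, Real.one_rpow,
    two_pow_shift2 r, two_pow_shift r, mul_one, one_mul, Pi.add_apply]
  set c := (2:ℝ) ^ (r - 1) with hcdef
  have hcne : (1:ℝ) + c ≠ 0 := by positivity
  field_simp
  ring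

lemma key (r p : ℝ) (hr0 : 0 < r) (hp0 : 0 < p)
    (hyp : ∀ t : ℝ, 0 < t →
      (1 + t ^ p) ^ (1 / p) * (2 ^ r + 2) ^ (1 / r)
        ≤ 2 ^ (1 / p) * (1 + (1 + t) ^ r + t ^ r) ^ (1 / r)) :
    p ≤ (r + 2 ^ (r - 1)) / (1 + 2 ^ (r - 1)) := by
  have hc : (0:ℝ) < 2 ^ (r - 1) := Real.rpow_pos_of_pos (by norm_num) _
  have h2r2 : (0:ℝ) < 2 ^ r + 2 := by rw [two_pow_shift]; linarith
  have hH : ∀ t : ℝ, 0 < t → Hfun r p t ≤ 0 := by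
    intro t ht
    have hA := denomA_pos p t ht
    have hN := denomN_pos r t ht
    have hLpos : 0 < (1 + t ^ p) ^ (1 / p) * (2 ^ r + 2) ^ (1 / r) := by positivity
    have hlog := Real.log_le_log hLpos (hyp t ht)
    rw [Real.log_mul (by positivity) (by positivity),
        Real.log_mul (by positivity) (by positivity),
        Real.log_rpow hA, Real.log_rpow h2r2,
        Real.log_rpow (by norm_num : (0:ℝ) < 2), Real.log_rpow hN] at hlog
    have hid : Hfun r p t =
        r * ((1 / p * Real.log (1 + t ^ p) + 1 / r * Real.log (2 ^ r + 2)) -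
          (1 / p * Real.log 2 + 1 / r * Real.log (1 + (1 + t) ^ r + t ^ r))) := by
      unfold Hfun; field_simp; ring
    rw [hid]
    have := mul_nonneg hr0.le (sub_nonneg.mpr hlog)
    linarith
  have hHone : Hfun r p 1 = 0 := by
    unfold Hfun
    rw [Real.one_rpow]
    norm_num
    rw [show (1:ℝ) + 2 ^ r + 1 = 2 ^ r + 2 from by ring, sub_self]
  have hHdone : Hd r p 1 = 0 := by
    unfold Hd
    rw [Real.one_rpow, Real.one_rpow, Real.one_rpow, Real.one_rpow,
      show ((1:ℝ) + 1) = 2 by norm_num, two_pow_shift r]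
    field_simp
    ring
  have mvt : ∀ n : ℕ, ∃ ξ : ℝ, 1 < ξ ∧ ξ < 1 + 1 / ((n : ℝ) + 1) ∧ Hd r p ξ ≤ 0 := by
    intro n
    have hεpos : (0:ℝ) < 1 / ((n : ℝ) + 1) := by positivity
    obtain ⟨b, hbdef⟩ : ∃ b : ℝ, b = 1 + 1 / (2 * ((n : ℝ) + 1)) := ⟨_, rfl⟩
    have hb1 : (1:ℝ) < b := by
      have : (0:ℝ) < 1 / (2 * ((n : ℝ) + 1)) := by positivity
      linarith
    have hb2 : b < 1 + 1 / ((n : ℝ) + 1) := by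
      have h1 : 1 / (2 * ((n : ℝ) + 1)) < 1 / ((n : ℝ) + 1) := by
        apply div_lt_div_of_pos_left one_pos (by positivity)
        linarith [show (0:ℝ) < (n:ℝ) + 1 by positivity]
      linarith
    have cont : ContinuousOn (Hfun r p) (Set.Icc 1 b) := fun x hx =>
      (hasDerivAt_Hfun r p hp0.ne' x (by linarith [hx.1])).continuousAt.continuousWithinAt
    have derivs : ∀ x ∈ Set.Ioo (1:ℝ) b, HasDerivAt (Hfun r p) (Hd r p x) x := fun x hx =>
      hasDerivAt_Hfun r p hp0.ne' x (by linarith [hx.1])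
    obtain ⟨ξ, hξ, heq⟩ := exists_hasDerivAt_eq_slope (Hfun r p) (Hd r p) hb1 cont derivs
    refine ⟨ξ, hξ.1, by linarith [hξ.2, hb2], ?_⟩
    rw [heq, hHone, sub_zero]
    have hb0 : Hfun r p b ≤ 0 := hH b (by linarith)
    exact div_nonpos_of_nonpos_of_nonneg hb0 (by linarith)
  choose ξ hξ1 hξ2 hξ3 using mvt
  have hup : Tendsto (fun n : ℕ => 1 + 1 / ((n : ℝ) + 1)) atTop (𝓝 1) := by
    have := tendsto_one_div_add_atTop_nhds_zero_nat (𝕜 := ℝ)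
    have := this.const_add (1 : ℝ)
    simpa using this
  have htend : Tendsto ξ atTop (𝓝 1) :=
    tendsto_of_tendsto_of_tendsto_of_le_of_le tendsto_const_nhds hup
      (fun n => (hξ1 n).le) (fun n => (hξ2 n).le)
  have htend' : Tendsto ξ atTop (𝓝[≠] 1) :=
    tendsto_nhdsWithin_of_tendsto_nhds_of_eventually_within ξ htend
      (Eventually.of_forall fun n => (hξ1 n).ne')
  have hslope := (hasDerivAt_iff_tendsto_slope.mp (hasDerivAt_Hd_one r p)).comp htend'
  have hD : r * ((p - 2) / 4) - r * ((r - 2 ^ (r - 1) - 2) / (4 * (1 + 2 ^ (r - 1)))) ≤ 0 := by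
    refine le_of_tendsto hslope (Eventually.of_forall fun n => ?_)
    show slope (Hd r p) 1 (ξ n) ≤ 0
    rw [slope_def_field, hHdone, sub_zero]
    exact div_nonpos_of_nonpos_of_nonneg (hξ3 n) (by linarith [hξ1 n])
  set c : ℝ := 2 ^ (r - 1) with hcdef
  have hrearr : r * ((p - 2) / 4) - r * ((r - c - 2) / (4 * (1 + c)))
      = r * ((p - 2) * (1 + c) - (r - c - 2)) / (4 * (1 + c)) := by
    field_simp
  rw [hrearr] at hD
  have hnum : r * ((p - 2) * (1 + c) - (r - c - 2)) ≤ 0 := by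
    by_contra hcon
    push_neg at hcon
    have : 0 < r * ((p - 2) * (1 + c) - (r - c - 2)) / (4 * (1 + c)) :=
      div_pos hcon (by positivity)
    linarith
  have hX : (p - 2) * (1 + c) - (r - c - 2) ≤ 0 := by
    by_contra hcon
    push_neg at hcon
    nlinarith
  rw [le_div_iff₀ (by positivity : (0:ℝ) < 1 + c)]
  nlinarith

end Aux

theorem reverse_young_hypercube_necessary_critical_line (r p q : ℝ)
    (hr0 : 0 < r) (hr1 : r < 1)
    (hp0 : 0 < p) (hp1 : p < 1) (hq0 : 0 < q) (hq1 : q < 1)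
    (hpq : 1 / p + 1 / q = Real.logb 2 (2 ^ r + 2) / r)
    (h : ∀ d : ℕ, 1 ≤ d → ∀ f g : (Fin d → ℤ) → ℝ,
      (∀ x, 0 ≤ f x) → (∀ x, 0 ≤ g x) →
        SupportedInCube f → SupportedInCube g →
          lnorm p f * lnorm q g ≤ lnorm r (cconv f g)) :
    1 / (Real.logb 2 (2 ^ r + 2) / r - (1 + 2 ^ (r - 1)) / (r + 2 ^ (r - 1))) ≤ p ∧
    1 / (Real.logb 2 (2 ^ r + 2) / r - (1 + 2 ^ (r - 1)) / (r + 2 ^ (r - 1))) ≤ q ∧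
    p ≤ (r + 2 ^ (r - 1)) / (1 + 2 ^ (r - 1)) ∧
    q ≤ (r + 2 ^ (r - 1)) / (1 + 2 ^ (r - 1)) := by
  have hc : (0:ℝ) < 2 ^ (r - 1) := Real.rpow_pos_of_pos (by norm_num) _
  have h2r2 : (0:ℝ) < 2 ^ r + 2 := by rw [two_pow_shift]; linarith
  -- product of the two powers of 2
  have hprod : (2:ℝ) ^ (1 / p) * 2 ^ (1 / q) = (2 ^ r + 2) ^ (1 / r) := by
    rw [← Real.rpow_add (by norm_num : (0:ℝ) < 2), hpq, div_eq_mul_one_div,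
      Real.rpow_mul (by norm_num : (0:ℝ) ≤ 2),
      Real.rpow_logb (by norm_num) (by norm_num) h2r2]
  have h2p : (0:ℝ) < 2 ^ (1 / p) := Real.rpow_pos_of_pos (by norm_num) _
  have h2q : (0:ℝ) < 2 ^ (1 / q) := Real.rpow_pos_of_pos (by norm_num) _
  -- hypothesis for key with p
  have hypp : ∀ t : ℝ, 0 < t →
      (1 + t ^ p) ^ (1 / p) * (2 ^ r + 2) ^ (1 / r)
        ≤ 2 ^ (1 / p) * (1 + (1 + t) ^ r + t ^ r) ^ (1 / r) := by
    intro t ht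
    have hinst := instantiate r p q h hr0.ne' hp0.ne' hq0.ne' 1 t 1 1
      (by norm_num) ht.le (by norm_num) (by norm_num)
    simp only [Real.one_rpow, one_mul, mul_one] at hinst
    norm_num at hinst
    calc (1 + t ^ p) ^ (1 / p) * (2 ^ r + 2) ^ (1 / r)
        = 2 ^ (1 / p) * ((1 + t ^ p) ^ (1 / p) * 2 ^ (1 / q)) := by rw [← hprod]; ring
      _ ≤ 2 ^ (1 / p) * (1 + (1 + t) ^ r + t ^ r) ^ (1 / r) := by
          apply mul_le_mul_of_nonneg_left _ h2p.le
          simpa [one_div] using hinst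
  -- hypothesis for key with q
  have hypq : ∀ t : ℝ, 0 < t →
      (1 + t ^ q) ^ (1 / q) * (2 ^ r + 2) ^ (1 / r)
        ≤ 2 ^ (1 / q) * (1 + (1 + t) ^ r + t ^ r) ^ (1 / r) := by
    intro t ht
    have hinst := instantiate r p q h hr0.ne' hp0.ne' hq0.ne' 1 1 1 t
      (by norm_num) (by norm_num) (by norm_num) ht.le
    simp only [Real.one_rpow, one_mul, mul_one] at hinst
    norm_num at hinst
    calc (1 + t ^ q) ^ (1 / q) * (2 ^ r + 2) ^ (1 / r)
        = 2 ^ (1 / q) * (2 ^ (1 / p) * (1 + t ^ q) ^ (1 / q)) := by rw [← hprod]; ring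
      _ ≤ 2 ^ (1 / q) * (1 + (1 + t) ^ r + t ^ r) ^ (1 / r) := by
          apply mul_le_mul_of_nonneg_left _ h2q.le
          rw [show (1:ℝ) + t = t + 1 from by ring]
          simpa [one_div] using hinst
  have hpM : p ≤ (r + 2 ^ (r - 1)) / (1 + 2 ^ (r - 1)) := key r p hr0 hp0 hypp
  have hqM : q ≤ (r + 2 ^ (r - 1)) / (1 + 2 ^ (r - 1)) := key r q hr0 hq0 hypq
  set c : ℝ := 2 ^ (r - 1) with hcdef
  have hrc : (0:ℝ) < r + c := by linarith
  have h1c : (0:ℝ) < 1 + c := by linarith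
  -- lower bound for p (from upper bound for q)
  have hqinv : (1 + c) / (r + c) ≤ 1 / q := by
    rw [div_le_div_iff₀ hrc hq0]
    have := (le_div_iff₀ h1c).mp hqM
    nlinarith
  have hpinv : (1 + c) / (r + c) ≤ 1 / p := by
    rw [div_le_div_iff₀ hrc hp0]
    have := (le_div_iff₀ h1c).mp hpM
    nlinarith
  have hLp : 1 / p ≤ Real.logb 2 (2 ^ r + 2) / r - (1 + c) / (r + c) := by linarith
  have hLq : 1 / q ≤ Real.logb 2 (2 ^ r + 2) / r - (1 + c) / (r + c) := by linarith
  have hppos : (0:ℝ) < 1 / p := by positivity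
  have hqpos : (0:ℝ) < 1 / q := by positivity
  refine ⟨?_, ?_, hpM, hqM⟩
  · have := one_div_le_one_div_of_le hppos hLp
    rwa [one_div_one_div] at this
  · have := one_div_le_one_div_of_le hqpos hLq
    rwa [one_div_one_div] at this
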